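/- Let p = 2, e ≥ 1, q = 2^e, and 1 ≤ m, n ≤ q-1; let d = gcd(q-1, m, n), and let e_s be the positive divisor of e such that q_s = (q-1)/(2^{e_s}-1) is the largest among the numbers q_i = (q-1)/(2^{e_i}-1) (over positive divisors e_i of e) dividing d. Then the monomial digraph D(q;m,n) has exactly 2^{e-e_s} strong components, all pairwise isomorphic, each of order 2^{e+e_s}. -/

import Mathlib

open Relation Polynomial

private lemma two_pow_sub_one_dvd {a b : ℕ} (h : a ∣ b) : 2 ^ a - 1 ∣ 2 ^ b - 1 := by
  obtain ⟨k, rfl⟩ := h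
  rw [pow_mul]
  simpa using Nat.sub_dvd_pow_sub_pow (2 ^ a) 1 k

private def MSet (m n : ℕ) (F : Type*) [Field F] : Set F := {z | ∃ x y : F, z = x ^ m * y ^ n}

private def SM (m n : ℕ) (F : Type*) [Field F] : AddSubmonoid F :=
  AddSubmonoid.closure (MSet m n F)

private lemma SM_mul_mem (m n : ℕ) {F : Type*} [Field F] :
    ∀ {a b : F}, a ∈ SM m n F → b ∈ SM m n F → a * b ∈ SM m n F := by
  have hM : ∀ a ∈ MSet m n F, ∀ b ∈ MSet m n F, a * b ∈ MSet m n F := by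
    rintro _ ⟨x, y, rfl⟩ _ ⟨x', y', rfl⟩
    exact ⟨x * x', y * y', by ring⟩
  intro a b ha hb
  induction ha using AddSubmonoid.closure_induction generalizing b with
  | mem x hx =>
    induction hb using AddSubmonoid.closure_induction with
    | mem y hy => exact AddSubmonoid.subset_closure (hM x hx y hy)
    | zero => rw [mul_zero]; exact (SM m n F).zero_mem
    | add y z _ _ ihy ihz => rw [mul_add]; exact (SM m n F).add_mem ihy ihz
  | zero => rw [zero_mul]; exact (SM m n F).zero_mem
  | add x y _ _ ihx ihy => rw [add_mul]; exact (SM m n F).add_mem (ihx hb) (ihy hb)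

private def RS (m n : ℕ) (F : Type*) [Field F] [CharP F 2] : Subring F where
  carrier := SM m n F
  zero_mem' := (SM m n F).zero_mem
  add_mem' := fun ha hb => (SM m n F).add_mem ha hb
  one_mem' := AddSubmonoid.subset_closure ⟨1, 1, by simp⟩
  mul_mem' := fun ha hb => SM_mul_mem m n ha hb
  neg_mem' := fun {x} hx => by rw [CharTwo.neg_eq]; exact hx

private lemma pow_m_fixed {e es m : ℕ} {F : Type*} [Field F] [Fintype F]
    (hF : Fintype.card F = 2 ^ e) (hm : 1 ≤ m) (hesdvd : es ∣ e)
    (hqsm : (2 ^ e - 1) / (2 ^ es - 1) ∣ m) (x : F) :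
    (x ^ m) ^ (2 ^ es) = x ^ m := by
  set qs := (2 ^ e - 1) / (2 ^ es - 1) with hqs
  rcases eq_or_ne x 0 with rfl | hx
  · rw [zero_pow (by omega : m ≠ 0), zero_pow (by positivity : (2:ℕ) ^ es ≠ 0)]
  · have hd1 : 2 ^ es - 1 ∣ 2 ^ e - 1 := two_pow_sub_one_dvd hesdvd
    have hqsmul : qs * (2 ^ es - 1) = 2 ^ e - 1 := Nat.div_mul_cancel hd1
    have hes1 : 1 ≤ 2 ^ es := Nat.one_le_two_pow
    have harith : m * 2 ^ es = m + (m / qs) * (2 ^ e - 1) := by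
      calc m * 2 ^ es = m * 1 + m * (2 ^ es - 1) := by rw [← Nat.mul_add]; congr 1; omega
        _ = m + (m / qs) * qs * (2 ^ es - 1) := by rw [Nat.div_mul_cancel hqsm, mul_one]
        _ = m + (m / qs) * (2 ^ e - 1) := by rw [mul_assoc, hqsmul]
    rw [← pow_mul, harith, pow_add, pow_mul, ← hF,
      FiniteField.pow_card_sub_one_eq_one (x ^ (m / qs)) (pow_ne_zero _ hx), mul_one]

private lemma card_fs_le (es : ℕ) (hes : 1 ≤ es) (F : Type*) [Field F] [Fintype F] :
    ({x : F | x ^ (2 ^ es) = x}).ncard ≤ 2 ^ es := by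
  classical
  set P : Polynomial F := X ^ (2 ^ es) - X with hP
  have h2es : 2 ≤ 2 ^ es := by
    calc 2 = 2 ^ 1 := (pow_one 2).symm
      _ ≤ 2 ^ es := Nat.pow_le_pow_right (by norm_num) hes
  have hdlt : (X : Polynomial F).natDegree < (X ^ (2 ^ es) : Polynomial F).natDegree := by
    rw [natDegree_X_pow, natDegree_X]; omega
  have hdeg : P.natDegree = 2 ^ es := by
    rw [hP, natDegree_sub_eq_left_of_natDegree_lt hdlt, natDegree_X_pow]
  have hP0 : P ≠ 0 := by
    intro h
    rw [h, natDegree_zero] at hdeg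
    omega
  have hsub : {x : F | x ^ (2 ^ es) = x} ⊆ (P.roots.toFinset : Set F) := by
    intro x hx
    simp only [Finset.coe_sort_coe, Multiset.mem_toFinset, Finset.mem_coe]
    rw [mem_roots hP0]
    simp only [IsRoot.def, hP, eval_sub, eval_pow, eval_X]
    rw [hx, sub_self]
  calc ({x : F | x ^ (2 ^ es) = x}).ncard ≤ ((P.roots.toFinset : Set F)).ncard :=
        Set.ncard_le_ncard hsub (Set.toFinite _)
    _ = P.roots.toFinset.card := Set.ncard_coe_finset _
    _ ≤ Multiset.card P.roots := Multiset.toFinset_card_le _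
    _ ≤ P.natDegree := P.card_roots'
    _ = 2 ^ es := hdeg

section RTG
variable {F : Type*} [Field F] [CharP F 2] {m n : ℕ}

private lemma rtg_of_mem (hm : 1 ≤ m) (hn : 1 ≤ n) {s : F} (hs : s ∈ SM m n F) :
    ∀ a b c : F, ReflTransGen (fun z w : F × F => z.2 + w.2 = z.1 ^ m * w.1 ^ n) (a, c) (b, c + s) := by
  set G := fun z w : F × F => z.2 + w.2 = z.1 ^ m * w.1 ^ n with hGdef
  have hzero_pow_m : (0 : F) ^ m = 0 := zero_pow (by omega)
  have hzero_pow_n : (0 : F) ^ n = 0 := zero_pow (by omega)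
  have hto0 : ∀ (a : F) (t : F), G (a, t) (0, t) := by
    intro a t
    show t + t = a ^ m * (0 : F) ^ n
    rw [hzero_pow_n, mul_zero, CharTwo.add_self_eq_zero]
  have hfrom0 : ∀ (b : F) (t : F), G (0, t) (b, t) := by
    intro b t
    show t + t = (0 : F) ^ m * b ^ n
    rw [hzero_pow_m, zero_mul, CharTwo.add_self_eq_zero]
  induction hs using AddSubmonoid.closure_induction with
  | mem x hx =>
    intro a b c
    obtain ⟨u, v, rfl⟩ := hx
    have h1 : G (u, c) (v, c + u ^ m * v ^ n) := by
      show c + (c + u ^ m * v ^ n) = u ^ m * v ^ n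
      rw [← add_assoc, CharTwo.add_self_eq_zero, zero_add]
    exact ((((ReflTransGen.single (hto0 a c)).tail (hfrom0 u c)).tail h1).tail
      (hto0 v _)).tail (hfrom0 b _)
  | zero =>
    intro a b c
    rw [add_zero]
    exact (ReflTransGen.single (hto0 a c)).tail (hfrom0 b c)
  | add x y hx hy ihx ihy =>
    intro a b c
    have := (ihx a 0 c).trans (ihy 0 b (c + x))
    rwa [add_assoc] at this

private lemma mem_of_rtg {z w : F × F}
    (h : ReflTransGen (fun z w : F × F => z.2 + w.2 = z.1 ^ m * w.1 ^ n) z w) :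
    z.2 + w.2 ∈ SM m n F := by
  induction h with
  | refl => rw [CharTwo.add_self_eq_zero]; exact (SM m n F).zero_mem
  | tail hab hbc ih =>
    rename_i b w'
    have key : z.2 + w'.2 = (z.2 + b.2) + (b.2 + w'.2) := by
      linear_combination -(CharTwo.add_self_eq_zero b.2)
    rw [key]
    exact (SM m n F).add_mem ih (AddSubmonoid.subset_closure ⟨b.1, w'.1, hbc⟩)

private lemma rtg_iff (hm : 1 ≤ m) (hn : 1 ≤ n) (z w : F × F) :
    ReflTransGen (fun z w : F × F => z.2 + w.2 = z.1 ^ m * w.1 ^ n) z w ↔ z.2 + w.2 ∈ SM m n F := by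
  constructor
  · exact mem_of_rtg
  · intro h
    have := rtg_of_mem hm hn h z.1 w.1 z.2
    have h2 : z.2 + (z.2 + w.2) = w.2 := by
      rw [← add_assoc, CharTwo.add_self_eq_zero, zero_add]
    rwa [h2] at this

end RTG
private lemma pow_d_mem {m n d : ℕ} {F : Type*} [Field F] [Fintype F]
    (hd : d = Nat.gcd (Fintype.card F - 1) (Nat.gcd m n)) {x : F} (hx : x ≠ 0) :
    x ^ d ∈ MSet m n F := by
  set q1 := Fintype.card F - 1 with hq1
  set u : Fˣ := Units.mk0 x hx with hu
  set A : ℤ := Nat.gcdA m n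
  set B : ℤ := Nat.gcdB m n
  set C : ℤ := Nat.gcdA q1 (Nat.gcd m n)
  set D : ℤ := Nat.gcdB q1 (Nat.gcd m n)
  have h1 : (Nat.gcd m n : ℤ) = m * A + n * B := Nat.gcd_eq_gcd_ab m n
  have h2 : (d : ℤ) = q1 * C + (Nat.gcd m n) * D := by
    rw [hd]; exact Nat.gcd_eq_gcd_ab q1 (Nat.gcd m n)
  have hdz : (d : ℤ) = (q1 : ℤ) * C + ((A * D) * m + (B * D) * n) := by
    rw [h2, h1]; ring
  have hu1 : u ^ ((q1 : ℕ) : ℤ) = 1 := by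
    rw [zpow_natCast]
    ext
    push_cast
    exact FiniteField.pow_card_sub_one_eq_one x hx
  have key : u ^ (d : ℤ) = (u ^ (A * D)) ^ m * (u ^ (B * D)) ^ n := by
    calc u ^ (d : ℤ) = u ^ ((q1 : ℤ) * C) * u ^ ((A * D) * m + (B * D) * n) := by
          rw [← zpow_add, ← hdz]
      _ = 1 * (u ^ ((A * D) * m) * u ^ ((B * D) * n)) := by
          rw [zpow_mul, hu1, one_zpow, zpow_add]
      _ = (u ^ (A * D)) ^ m * (u ^ (B * D)) ^ n := by
          rw [one_mul, ← zpow_natCast (u ^ (A * D)) m, ← zpow_natCast (u ^ (B * D)) n,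
            ← zpow_mul, ← zpow_mul]
  refine ⟨((u ^ (A * D) : Fˣ) : F), ((u ^ (B * D) : Fˣ) : F), ?_⟩
  have := congrArg (Units.val) key
  rw [zpow_natCast] at this
  push_cast at this ⊢
  simp only [hu, Units.val_mk0] at this
  exact this

private lemma card_RS {e es m n d : ℕ} {F : Type*} [Field F] [Fintype F] [CharP F 2]
    (he : 1 ≤ e) (hF : Fintype.card F = 2 ^ e)
    (hm1 : 1 ≤ m) (hn1 : 1 ≤ n)
    (hd : d = Nat.gcd (2 ^ e - 1) (Nat.gcd m n))
    (hes1 : 1 ≤ es) (hesdvd : es ∣ e)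
    (hqs : (2 ^ e - 1) / (2 ^ es - 1) ∣ d)
    (hmax : ∀ ei : ℕ, 1 ≤ ei → ei ∣ e → (2 ^ e - 1) / (2 ^ ei - 1) ∣ d →
      (2 ^ e - 1) / (2 ^ ei - 1) ≤ (2 ^ e - 1) / (2 ^ es - 1)) :
    Nat.card (RS m n F) = 2 ^ es := by
  classical
  haveI : Fact (Nat.Prime 2) := ⟨Nat.prime_two⟩
  have hq1pos : 0 < 2 ^ e - 1 := by
    have : 2 ≤ 2 ^ e := by calc 2 = 2 ^ 1 := (pow_one 2).symm
                                _ ≤ 2 ^ e := Nat.pow_le_pow_right (by norm_num) he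
    omega
  have hdm : d ∣ m := hd ▸ (Nat.gcd_dvd_right _ _).trans (Nat.gcd_dvd_left m n)
  have hdn : d ∣ n := hd ▸ (Nat.gcd_dvd_right _ _).trans (Nat.gcd_dvd_right m n)
  -- upper bound: SM ⊆ fixed points of Frobenius^es
  have hub : Nat.card (RS m n F) ≤ 2 ^ es := by
    set Fsub : AddSubmonoid F :=
      { carrier := {x : F | x ^ (2 ^ es) = x}
        zero_mem' := by
          show (0 : F) ^ (2 ^ es) = 0
          exact zero_pow (by positivity)
        add_mem' := by
          intro a b ha hb
          show (a + b) ^ (2 ^ es) = a + b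
          rw [add_pow_char_pow, ha, hb] } with hFsub
    have hMsub : MSet m n F ⊆ Fsub := by
      rintro _ ⟨x, y, rfl⟩
      show (x ^ m * y ^ n) ^ (2 ^ es) = x ^ m * y ^ n
      rw [mul_pow, pow_m_fixed hF hm1 hesdvd (hqs.trans hdm) x,
        pow_m_fixed hF hn1 hesdvd (hqs.trans hdn) y]
    have hle : SM m n F ≤ Fsub := AddSubmonoid.closure_le.mpr hMsub
    have hcoe : Nat.card (RS m n F) = ((RS m n F : Set F)).ncard := by
      rw [← Nat.card_coe_set_eq]
      rfl
    rw [hcoe]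
    calc ((RS m n F : Set F)).ncard ≤ ({x : F | x ^ (2 ^ es) = x}).ncard :=
          Set.ncard_le_ncard hle (Set.toFinite _)
      _ ≤ 2 ^ es := card_fs_le es hes1 F
  -- lower bound
  letI : Fintype (RS m n F) := Fintype.ofFinite _
  letI : Field (RS m n F) := (Finite.isField_of_domain _).toField
  obtain ⟨k, -, hcardR⟩ := FiniteField.card (RS m n F) 2
  set e' : ℕ := (k : ℕ) with he'
  have he'1 : 1 ≤ e' := k.2
  -- e' divides e
  letI : Algebra (RS m n F) F := (RS m n F).subtype.toAlgebra
  have hfinrank : Fintype.card F = Fintype.card (RS m n F) ^ Module.finrank (RS m n F) F :=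
    Module.card_eq_pow_finrank
  have he'dvd : e' ∣ e := by
    rw [hF, hcardR, ← pow_mul] at hfinrank
    exact ⟨Module.finrank (RS m n F) F, Nat.pow_right_injective (le_refl 2) hfinrank⟩
  -- (2^e - 1)/(2^e' - 1) divides d
  have hd1 : 2 ^ e' - 1 ∣ 2 ^ e - 1 := two_pow_sub_one_dvd he'dvd
  have he'pos : 0 < 2 ^ e' - 1 := by
    have : 2 ≤ 2 ^ e' := by calc 2 = 2 ^ 1 := (pow_one 2).symm
                                 _ ≤ 2 ^ e' := Nat.pow_le_pow_right (by norm_num) he'1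
    omega
  have hpowd : ∀ x : F, x ≠ 0 → (x ^ d) ^ (2 ^ e' - 1) = 1 := by
    intro x hx
    have hmem : x ^ d ∈ RS m n F := by
      have : x ^ d ∈ MSet m n F := pow_d_mem (by rw [hF]; exact hd) hx
      exact AddSubmonoid.subset_closure this
    have hne : (⟨x ^ d, hmem⟩ : RS m n F) ≠ 0 := by
      intro hc
      apply pow_ne_zero d hx
      exact congrArg Subtype.val hc
    have := FiniteField.pow_card_sub_one_eq_one _ hne
    rw [hcardR] at this
    have := congrArg Subtype.val this
    push_cast at this
    rw [← this]
  -- order of the cyclic group divides d * (2^e' - 1)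
  have hdvd2 : 2 ^ e - 1 ∣ d * (2 ^ e' - 1) := by
    obtain ⟨g, hg⟩ := IsCyclic.exists_generator (α := Fˣ)
    have horder : orderOf g = 2 ^ e - 1 := by
      rw [orderOf_eq_card_of_forall_mem_zpowers hg, Nat.card_eq_fintype_card,
        Fintype.card_units, hF]
    have hgpow : g ^ (d * (2 ^ e' - 1)) = 1 := by
      have hgx : (g : F) ≠ 0 := Units.ne_zero g
      have := hpowd (g : F) hgx
      rw [← pow_mul] at this
      ext
      push_cast
      exact this
    rw [← horder]
    exact orderOf_dvd_of_pow_eq_one hgpow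
  have hqe' : (2 ^ e - 1) / (2 ^ e' - 1) ∣ d := by
    have h1 : ((2 ^ e - 1) / (2 ^ e' - 1)) * (2 ^ e' - 1) ∣ d * (2 ^ e' - 1) := by
      rw [Nat.div_mul_cancel hd1]; exact hdvd2
    exact (Nat.mul_dvd_mul_iff_right he'pos).mp h1
  have hle' := hmax e' he'1 he'dvd hqe'
  -- conclude es ≤ e'
  have heses : es ≤ e' := by
    by_contra hcon
    push_neg at hcon
    have hab : 2 ^ e' - 1 < 2 ^ es - 1 := by
      have : 2 ^ e' < 2 ^ es := Nat.pow_lt_pow_right (by norm_num) hcon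
      have h1 : 1 ≤ 2 ^ e' := Nat.one_le_two_pow
      omega
    have hbd : 2 ^ es - 1 ∣ 2 ^ e - 1 := two_pow_sub_one_dvd hesdvd
    have hpos2 : 0 < (2 ^ e - 1) / (2 ^ es - 1) :=
      Nat.div_pos (Nat.le_of_dvd hq1pos hbd) (by omega)
    have : (2 ^ e - 1) / (2 ^ es - 1) < (2 ^ e - 1) / (2 ^ e' - 1) := by
      rw [Nat.lt_div_iff_mul_lt' hd1]
      calc (2 ^ e' - 1) * ((2 ^ e - 1) / (2 ^ es - 1))
          < (2 ^ es - 1) * ((2 ^ e - 1) / (2 ^ es - 1)) :=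
            (Nat.mul_lt_mul_right hpos2).mpr hab
        _ = 2 ^ e - 1 := by rw [mul_comm, Nat.div_mul_cancel hbd]
    omega
  have hlb : 2 ^ es ≤ Nat.card (RS m n F) := by
    rw [Nat.card_eq_fintype_card, hcardR]
    exact Nat.pow_le_pow_right (by norm_num) heses
  omega

/-- For `q = 2^e`, the monomial digraph `D(q;m,n)` has exactly
`2^{e-e_s}` strong components, all pairwise isomorphic, each of order `2^{e+e_s}`. -/
theorem stmt_19 {e : ℕ} (he : 1 ≤ e)
    {F : Type*} [Field F] [Fintype F]
    (hF : Fintype.card F = 2 ^ e)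
    (m n : ℕ) (hm1 : 1 ≤ m) (hm2 : m ≤ 2 ^ e - 1) (hn1 : 1 ≤ n) (hn2 : n ≤ 2 ^ e - 1)
    (d : ℕ) (hd : d = Nat.gcd (2 ^ e - 1) (Nat.gcd m n))
    (es : ℕ) (hes1 : 1 ≤ es) (hesdvd : es ∣ e)
    (hqs : (2 ^ e - 1) / (2 ^ es - 1) ∣ d)
    (hmax : ∀ ei : ℕ, 1 ≤ ei → ei ∣ e → (2 ^ e - 1) / (2 ^ ei - 1) ∣ d →
      (2 ^ e - 1) / (2 ^ ei - 1) ≤ (2 ^ e - 1) / (2 ^ es - 1))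
    (comps : Set (Set (F × F)))
    (hcomps : comps = {S | ∃ z : F × F,
      S = {w | ReflTransGen (fun z w : F × F => z.2 + w.2 = z.1 ^ m * w.1 ^ n) z w ∧
               ReflTransGen (fun z w : F × F => z.2 + w.2 = z.1 ^ m * w.1 ^ n) w z}}) :
    comps.ncard = 2 ^ (e - es) ∧
    (∀ S ∈ comps, S.ncard = 2 ^ (e + es)) ∧
    ∀ S ∈ comps, ∀ T ∈ comps,
      ∃ ψ : S ≃ T, ∀ z w : S,
        ((z : F × F).2 + (w : F × F).2 = (z : F × F).1 ^ m * (w : F × F).1 ^ n) ↔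
        ((ψ z : F × F).2 + (ψ w : F × F).2 = (ψ z : F × F).1 ^ m * (ψ w : F × F).1 ^ n) := by
  classical
  -- characteristic 2
  have hp2 : ringChar F = 2 := by
    obtain ⟨k, hkp, hcard⟩ := FiniteField.card F (ringChar F)
    have hdvd : ringChar F ∣ 2 ^ e := by
      rw [← hF, hcard]
      exact dvd_pow_self _ (by exact_mod_cast k.ne_zero)
    exact (Nat.prime_dvd_prime_iff_eq hkp Nat.prime_two).mp (hkp.dvd_of_dvd_pow hdvd)
  haveI hch : CharP F 2 := by rw [← hp2]; exact ringChar.charP F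
  haveI : Fact (Nat.Prime 2) := ⟨Nat.prime_two⟩
  have hese : es ≤ e := Nat.le_of_dvd (by omega) hesdvd
  have hcardA : Nat.card (RS m n F) = 2 ^ es :=
    card_RS he hF hm1 hn1 hd hes1 hesdvd hqs hmax
  have hcardSM : Nat.card (SM m n F) = 2 ^ es := hcardA
  set f : F → Set (F × F) := fun c => {w : F × F | w.2 + c ∈ SM m n F} with hf
  -- comps = range f
  have hrange : comps = Set.range f := by
    rw [hcomps]
    ext T
    simp only [Set.mem_setOf_eq, Set.mem_range]
    constructor
    · rintro ⟨z, rfl⟩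
      refine ⟨z.2, ?_⟩
      ext w
      constructor
      · intro hw
        have h2 : w.2 + z.2 ∈ SM m n F := hw
        exact ⟨(rtg_iff hm1 hn1 z w).mpr (by rwa [add_comm] at h2),
          (rtg_iff hm1 hn1 w z).mpr h2⟩
      · intro hw
        obtain ⟨-, h2⟩ := hw
        exact (rtg_iff hm1 hn1 w z).mp h2
    · rintro ⟨c, rfl⟩
      refine ⟨(0, c), ?_⟩
      ext w
      constructor
      · intro hw
        have h2 : w.2 + c ∈ SM m n F := hw
        exact ⟨(rtg_iff hm1 hn1 ((0 : F), c) w).mpr (by rwa [add_comm] at h2),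
          (rtg_iff hm1 hn1 w ((0 : F), c)).mpr h2⟩
      · intro hw
        obtain ⟨-, h2⟩ := hw
        exact (rtg_iff hm1 hn1 w ((0 : F), c)).mp h2
  -- translation congruence for f
  have hfcongr : ∀ a b : F, a + b ∈ SM m n F → f a = f b := by
    intro a b hab
    ext w
    simp only [Set.mem_setOf_eq, hf]
    constructor
    · intro h
      have hh : w.2 + b = (w.2 + a) + (a + b) := by
        linear_combination -(CharTwo.add_self_eq_zero a)
      rw [hh]; exact (SM m n F).add_mem h hab
    · intro h
      have hh : w.2 + a = (w.2 + b) + (a + b) := by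
        linear_combination -(CharTwo.add_self_eq_zero b)
      rw [hh]; exact (SM m n F).add_mem h hab
  set Agrp : AddSubgroup F := (RS m n F).toAddSubgroup with hAgrp
  have hcardAgrp : Nat.card Agrp = 2 ^ es := hcardA
  let g : F ⧸ Agrp → Set (F × F) := Quotient.lift f (by
    intro a b hab
    have hab' := QuotientAddGroup.leftRel_apply.mp hab
    apply hfcongr
    rwa [CharTwo.neg_eq] at hab')
  have hmemf : ∀ a : F, (0, a) ∈ f a := by
    intro a
    show a + a ∈ SM m n F
    rw [CharTwo.add_self_eq_zero]
    exact (SM m n F).zero_mem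
  have hginj : Function.Injective g := by
    intro x y
    refine Quotient.inductionOn₂ x y (fun a b h => ?_)
    apply Quotient.sound
    apply QuotientAddGroup.leftRel_apply.mpr
    rw [CharTwo.neg_eq]
    have hfab : f a = f b := h
    have : (0, a) ∈ f b := by rw [← hfab]; exact hmemf a
    exact this
  have hrangeg : Set.range f = Set.range g := by
    ext T
    simp only [Set.mem_range]
    constructor
    · rintro ⟨c, rfl⟩; exact ⟨Quotient.mk _ c, rfl⟩
    · rintro ⟨q, rfl⟩
      refine Quotient.inductionOn q (fun c => ?_)
      exact ⟨c, rfl⟩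
  have hcount : comps.ncard = 2 ^ (e - es) := by
    rw [hrange, ← Nat.card_coe_set_eq, hrangeg, Nat.card_range_of_injective hginj]
    have htot := AddSubgroup.card_eq_card_quotient_mul_card_addSubgroup Agrp
    rw [Nat.card_eq_fintype_card (α := F), hF, hcardAgrp] at htot
    have h2 : 2 ^ (e - es) * 2 ^ es = 2 ^ e := by rw [← pow_add]; congr 1; omega
    have hpos : 0 < 2 ^ es := by positivity
    apply Nat.eq_of_mul_eq_mul_right hpos
    rw [h2, ← htot]
  -- size of each component
  have hsize : ∀ c : F, (f c).ncard = 2 ^ (e + es) := by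
    intro c
    have hEquiv : ↥(f c) ≃ F × ↥(SM m n F) :=
      { toFun := fun w => (w.1.1, ⟨w.1.2 + c, w.2⟩)
        invFun := fun p => ⟨(p.1, p.2.1 + c), show p.2.1 + c + c ∈ SM m n F by
          rw [add_assoc, CharTwo.add_self_eq_zero, add_zero]; exact p.2.2⟩
        left_inv := fun w => by
          apply Subtype.ext
          have : w.1.2 + c + c = w.1.2 := by
            rw [add_assoc, CharTwo.add_self_eq_zero, add_zero]
          exact Prod.ext rfl this
        right_inv := fun p => by
          ext
          · rfl
          · show p.2.1 + c + c = p.2.1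
            rw [add_assoc, CharTwo.add_self_eq_zero, add_zero] }
    rw [← Nat.card_coe_set_eq, Nat.card_congr hEquiv, Nat.card_prod,
      Nat.card_eq_fintype_card (α := F), hF, hcardSM, pow_add]
  -- isomorphisms between components
  have hiso : ∀ c c' : F, ∃ ψ : ↥(f c) ≃ ↥(f c'), ∀ z w : ↥(f c),
      ((z : F × F).2 + (w : F × F).2 = (z : F × F).1 ^ m * (w : F × F).1 ^ n) ↔
      ((ψ z : F × F).2 + (ψ w : F × F).2 = (ψ z : F × F).1 ^ m * (ψ w : F × F).1 ^ n) := by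
    intro c c'
    set δ : F := c + c' with hδ
    have hfor : ∀ x : F, x + c ∈ SM m n F → (x + δ) + c' ∈ SM m n F := by
      intro x hx
      have hh : (x + δ) + c' = x + c := by
        rw [hδ]; linear_combination (CharTwo.add_self_eq_zero c')
      rwa [hh]
    have hback : ∀ x : F, x + c' ∈ SM m n F → (x + δ) + c ∈ SM m n F := by
      intro x hx
      have hh : (x + δ) + c = x + c' := by
        rw [hδ]; linear_combination (CharTwo.add_self_eq_zero c)
      rwa [hh]
    have hdd : ∀ x : F, x + δ + δ = x := by
      intro x
      rw [add_assoc, CharTwo.add_self_eq_zero, add_zero]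
    refine ⟨{ toFun := fun w => ⟨(w.1.1, w.1.2 + δ), hfor w.1.2 w.2⟩
              invFun := fun w => ⟨(w.1.1, w.1.2 + δ), hback w.1.2 w.2⟩
              left_inv := fun w => Subtype.ext (Prod.ext rfl (hdd w.1.2))
              right_inv := fun w => Subtype.ext (Prod.ext rfl (hdd w.1.2)) }, ?_⟩
    intro z w
    have h1 : ((z : F × F).2 + δ) + ((w : F × F).2 + δ) = (z : F × F).2 + (w : F × F).2 := by
      linear_combination (CharTwo.add_self_eq_zero δ)
    show _ ↔ ((z : F × F).2 + δ) + ((w : F × F).2 + δ) = (z : F × F).1 ^ m * (w : F × F).1 ^ n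
    rw [h1]
  refine ⟨hcount, ?_, ?_⟩
  · intro S hS
    rw [hrange] at hS
    obtain ⟨c, rfl⟩ := hS
    exact hsize c
  · intro S hS T hT
    rw [hrange] at hS hT
    obtain ⟨c, rfl⟩ := hS
    obtain ⟨c', rfl⟩ := hT
    exact hiso c c'
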